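/- Let λ > 0 and define for x, y, z > 0 the function D(x,y,z) := c_λ 2^{2λ−2} (xyz)^{−2λ+1} [Δ(x,y,z)]^{2λ−2} when a triangle with side lengths x, y, z exists (Δ being its area) and D(x,y,z) := 0 otherwise, where c_λ := Γ(λ+1/2)/(Γ(λ)√π). Then for all x, z > 0, ∫₀^∞ D(x,y,z) y^{2λ} dy = 1. -/

import Mathlib

noncomputable section
open MeasureTheory Set

/-- The constant `c_λ = Γ(λ+1/2)/(Γ(λ)√π)`. -/
def cLam (lam : ℝ) : ℝ := Real.Gamma (lam + 1 / 2) / (Real.Gamma lam * Real.sqrt Real.pi)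

/-- Area of the Euclidean triangle with side lengths `x, y, z` (Heron's formula);
meaningful when the triangle inequalities hold. -/
def triArea (x y z : ℝ) : ℝ :=
  Real.sqrt (((x + y + z) / 2) * ((x + y + z) / 2 - x) * ((x + y + z) / 2 - y)
    * ((x + y + z) / 2 - z))

/-- The Hankel convolution kernel `D(x,y,z)`. -/
def DKer (lam x y z : ℝ) : ℝ :=
  if x < y + z ∧ y < x + z ∧ z < x + y then
    cLam lam * (2 : ℝ) ^ (2 * lam - 2) * (x * y * z) ^ (1 - 2 * lam)
      * (triArea x y z) ^ (2 * lam - 2)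
  else 0

/-- Real Beta integral with equal parameters. -/
lemma betaReal {a : ℝ} (ha : 0 < a) :
    ∫ u in (0:ℝ)..1, u ^ (a - 1) * (1 - u) ^ (a - 1)
      = Real.Gamma a * Real.Gamma a / Real.Gamma (2 * a) := by
  have h2a : (0:ℝ) < 2 * a := by linarith
  have hne : Real.Gamma (2 * a) ≠ 0 := (Real.Gamma_pos_of_pos h2a).ne'
  have key := Complex.Gamma_mul_Gamma_eq_betaIntegral (s := (a:ℂ)) (t := (a:ℂ))
    (by simpa using ha) (by simpa using ha)
  have hβ : Complex.betaIntegral a a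
      = ((∫ u in (0:ℝ)..1, u ^ (a - 1) * (1 - u) ^ (a - 1) : ℝ) : ℂ) := by
    rw [Complex.betaIntegral, ← intervalIntegral.integral_ofReal]
    refine intervalIntegral.integral_congr fun u hu => ?_
    rw [uIcc_of_le (zero_le_one)] at hu
    rw [Complex.ofReal_mul, Complex.ofReal_cpow hu.1,
      Complex.ofReal_cpow (by linarith [hu.2])]
    push_cast
    ring
  rw [hβ] at key
  have ha2 : ((a:ℂ) + a) = ((2 * a : ℝ) : ℂ) := by push_cast; ring
  rw [ha2, Complex.Gamma_ofReal, Complex.Gamma_ofReal, ← Complex.ofReal_mul,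
    ← Complex.ofReal_mul] at key
  have := Complex.ofReal_inj.mp key
  rw [eq_div_iff hne]
  linarith [this]

/-- rpow calculus helper. -/
lemma rpow_aux {u y P : ℝ} (hu : 0 < u) (hy : 0 < y) (hP : 0 < P) (r : ℝ) :
    (y / u) * ((4 * P / u ^ 2) ^ (r - 1))
      = (2:ℝ) ^ (2 * r - 2) * (y * u) ^ (1 - 2 * r) * ((Real.sqrt P) ^ (2 * r - 2))
        * y ^ (2 * r) := by
  have h1 : y / u = Real.exp (Real.log y - Real.log u) := by
    rw [Real.exp_sub, Real.exp_log hy, Real.exp_log hu]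
  have h2 : (4 * P / u ^ 2 : ℝ) ^ (r - 1)
      = Real.exp ((r - 1) * (Real.log 4 + Real.log P - 2 * Real.log u)) := by
    rw [Real.rpow_def_of_pos (by positivity)]
    congr 1
    rw [Real.log_div (by positivity) (by positivity), Real.log_mul (by norm_num) hP.ne',
      Real.log_pow]
    push_cast; ring
  have h3 : (2:ℝ) ^ (2 * r - 2) = Real.exp ((2 * r - 2) * Real.log 2) := by
    rw [Real.rpow_def_of_pos (by norm_num)]; ring_nf
  have h4 : (y * u : ℝ) ^ (1 - 2 * r) = Real.exp ((1 - 2 * r) * (Real.log y + Real.log u)) := by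
    rw [Real.rpow_def_of_pos (by positivity), Real.log_mul hy.ne' hu.ne']; ring_nf
  have h5 : (Real.sqrt P) ^ (2 * r - 2) = Real.exp ((2 * r - 2) * (Real.log P / 2)) := by
    rw [Real.rpow_def_of_pos (Real.sqrt_pos.mpr hP), Real.log_sqrt hP.le]; ring_nf
  have h6 : y ^ (2 * r) = Real.exp ((2 * r) * Real.log y) := by
    rw [Real.rpow_def_of_pos hy]; ring_nf
  have h7 : Real.log 4 = 2 * Real.log 2 := by
    rw [show (4:ℝ) = 2 ^ 2 by norm_num, Real.log_pow]; push_cast; ring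
  rw [h1, h2, h3, h4, h5, h6, ← Real.exp_add, ← Real.exp_add, ← Real.exp_add, ← Real.exp_add, h7]
  congr 1
  ring

theorem stmt5 (lam : ℝ) (hlam : 0 < lam) :
    ∀ x z : ℝ, 0 < x → 0 < z →
      ∫ y in Ioi (0 : ℝ), DKer lam x y z * y ^ (2 * lam) = 1 := by
  intro x z hx hz
  set a : ℝ := |x - z| with ha_def
  set b : ℝ := x + z with hb_def
  have ha0 : 0 ≤ a := abs_nonneg _
  have hab : a < b := abs_lt.mpr ⟨by simp [hb_def]; linarith, by simp [hb_def]; linarith⟩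
  have hu : (0:ℝ) < x * z := mul_pos hx hz
  set F : ℝ → ℝ := fun y => DKer lam x y z * y ^ (2 * lam) with hF_def
  set f : ℝ → ℝ := fun y => (x ^ 2 + z ^ 2 - y ^ 2) / (2 * (x * z)) with hf_def
  set g : ℝ → ℝ := fun t => cLam lam * (1 - t ^ 2) ^ (lam - 1) with hg_def
  -- membership in Ioo a b from triangle inequalities
  have hmem : ∀ y : ℝ, (x < y + z ∧ y < x + z ∧ z < x + y) ↔ y ∈ Ioo a b := by
    intro y
    constructor
    · rintro ⟨h1, h2, h3⟩
      exact ⟨abs_sub_lt_iff.mpr ⟨by linarith, by linarith⟩, h2⟩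
    · rintro ⟨h1, h2⟩
      rcases abs_sub_lt_iff.mp h1 with ⟨h3, h4⟩
      exact ⟨by linarith, h2, by linarith⟩
  -- Step 1 : restrict to Ioo a b
  have hsub : Ioo a b ⊆ Ioi (0:ℝ) := fun y hy => lt_of_le_of_lt ha0 hy.1
  have h1 : ∫ y in Ioi (0:ℝ), F y = ∫ y in Ioo a b, F y := by
    have hind : F = (Ioo a b).indicator F := by
      symm
      rw [Set.indicator_eq_self]
      intro y hy
      by_contra hmemy
      apply hy
      simp only [hF_def, DKer]
      rw [if_neg (fun hc => hmemy ((hmem y).mp hc)), zero_mul]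
    rw [hind, MeasureTheory.setIntegral_indicator measurableSet_Ioo,
      Set.inter_eq_self_of_subset_right hsub]
    exact MeasureTheory.setIntegral_congr_fun measurableSet_Ioo
      fun y hy => (Set.indicator_of_mem hy F).symm
  -- Step 2 : substitution
  have hderiv : ∀ y ∈ Ioo a b, HasDerivWithinAt f (-(y / (x * z))) (Ioo a b) y := by
    intro y _
    have h := ((hasDerivAt_pow 2 y).const_sub (x ^ 2 + z ^ 2)).div_const (2 * (x * z))
    have : HasDerivAt f (-(y / (x * z))) y := by
      refine h.congr_deriv ?_
      push_cast
      ring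
    exact this.hasDerivWithinAt
  have hinj : InjOn f (Ioo a b) := by
    intro y1 h1' y2 h2' heq
    have hy1 : 0 < y1 := hsub h1'
    have hy2 : 0 < y2 := hsub h2'
    have h2xz : (2 * (x * z)) ≠ 0 := by positivity
    have hnum : x ^ 2 + z ^ 2 - y1 ^ 2 = x ^ 2 + z ^ 2 - y2 ^ 2 :=
      (div_left_inj' h2xz).mp heq
    have hsq : y1 ^ 2 = y2 ^ 2 := by linarith
    have hs : Real.sqrt (y1 ^ 2) = Real.sqrt (y2 ^ 2) := by rw [hsq]
    rwa [Real.sqrt_sq hy1.le, Real.sqrt_sq hy2.le] at hs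
  have himg : f '' Ioo a b = Ioo (-1 : ℝ) 1 := by
    ext t
    constructor
    · rintro ⟨y, hy, rfl⟩
      have hy0 : 0 < y := hsub hy
      rcases abs_lt.mp hy.1 with ⟨h3, h4⟩
      have hy2 : y < x + z := hy.2
      constructor
      · simp only [hf_def]
        rw [lt_div_iff₀ (by positivity)]
        nlinarith [mul_pos (show (0:ℝ) < x + z - y by linarith)
          (show (0:ℝ) < x + z + y by linarith)]
      · simp only [hf_def]
        rw [div_lt_one (by positivity)]
        nlinarith [mul_pos (show (0:ℝ) < y - (x - z) by linarith)
          (show (0:ℝ) < y + (x - z) by linarith)]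
    · rintro ⟨ht1, ht2⟩
      have hq1 : (x - z) ^ 2 < x ^ 2 + z ^ 2 - 2 * (x * z) * t := by nlinarith
      have hq2 : x ^ 2 + z ^ 2 - 2 * (x * z) * t < (x + z) ^ 2 := by nlinarith
      have hq0 : 0 ≤ x ^ 2 + z ^ 2 - 2 * (x * z) * t := le_trans (sq_nonneg _) hq1.le
      refine ⟨Real.sqrt (x ^ 2 + z ^ 2 - 2 * (x * z) * t), ⟨?_, ?_⟩, ?_⟩
      · rw [ha_def, ← Real.sqrt_sq_eq_abs]
        exact Real.sqrt_lt_sqrt (sq_nonneg _) hq1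
      · have h := Real.sqrt_lt_sqrt hq0 hq2
        rwa [Real.sqrt_sq (by positivity : (0:ℝ) ≤ x + z)] at h
      · simp only [hf_def]
        rw [Real.sq_sqrt hq0]
        field_simp
        ring
  have key := integral_image_eq_integral_abs_deriv_smul measurableSet_Ioo hderiv hinj g
  rw [himg] at key
  -- pointwise identity on Ioo a b
  have hpt : ∀ y ∈ Ioo a b, |(-(y / (x * z)))| • g (f y) = F y := by
    intro y hy
    have hy0 : 0 < y := hsub hy
    have htri : x < y + z ∧ y < x + z ∧ z < x + y := (hmem y).mpr hy
    obtain ⟨t1, t2, t3⟩ := htri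
    rw [smul_eq_mul, abs_neg, abs_of_pos (by positivity : (0:ℝ) < y / (x * z))]
    simp only [hg_def, hF_def, DKer, if_pos (⟨t1, t2, t3⟩ : x < y + z ∧ y < x + z ∧ z < x + y),
      triArea, hf_def]
    set P : ℝ := ((x + y + z) / 2) * ((x + y + z) / 2 - x) * ((x + y + z) / 2 - y)
      * ((x + y + z) / 2 - z) with hP_def
    have hP : 0 < P := by
      refine mul_pos (mul_pos (mul_pos ?_ ?_) ?_) ?_ <;> linarith
    have hfy : 1 - ((x ^ 2 + z ^ 2 - y ^ 2) / (2 * (x * z))) ^ 2 = 4 * P / (x * z) ^ 2 := by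
      rw [hP_def]
      field_simp
      ring
    rw [hfy, show x * y * z = y * (x * z) from by ring]
    linear_combination (cLam lam) * rpow_aux hu hy0 hP lam
  have h2 : ∫ y in Ioo a b, F y = ∫ t in Ioo (-1:ℝ) 1, g t := by
    rw [key]
    exact (MeasureTheory.setIntegral_congr_fun measurableSet_Ioo fun y hy => (hpt y hy)).symm
  -- Step 3 : compute the Gegenbauer integral
  have h3 : ∫ t in Ioo (-1:ℝ) 1, g t = cLam lam * (2 * (4:ℝ) ^ (lam - 1) *
      (Real.Gamma lam * Real.Gamma lam / Real.Gamma (2 * lam))) := by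
    simp only [hg_def]
    rw [MeasureTheory.integral_const_mul]
    congr 1
    rw [← MeasureTheory.integral_Ioc_eq_integral_Ioo,
      ← intervalIntegral.integral_of_le (by norm_num : (-1:ℝ) ≤ 1)]
    have hsubst := intervalIntegral.integral_comp_sub_mul
      (f := fun t => (1 - t ^ 2) ^ (lam - 1)) (a := 0) (b := 1)
      (by norm_num : (2:ℝ) ≠ 0) 1
    norm_num at hsubst
    have h2int : (∫ t in (-1:ℝ)..1, (1 - t ^ 2) ^ (lam - 1))
        = 2 * ∫ u in (0:ℝ)..1, (1 - (1 - 2 * u) ^ 2) ^ (lam - 1) := by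
      rw [hsubst]; ring
    rw [h2int]
    have hcongr : ∀ u ∈ Set.uIcc (0:ℝ) 1,
        (1 - (1 - 2 * u) ^ 2) ^ (lam - 1)
          = (4:ℝ) ^ (lam - 1) * (u ^ (lam - 1) * (1 - u) ^ (lam - 1)) := by
      intro u hu
      rw [Set.uIcc_of_le zero_le_one] at hu
      rw [show (1 - (1 - 2 * u) ^ 2 : ℝ) = (4 * u) * (1 - u) from by ring,
        Real.mul_rpow (by linarith [hu.1]) (by linarith [hu.2]),
        Real.mul_rpow (by norm_num) hu.1]
      ring
    rw [intervalIntegral.integral_congr hcongr, intervalIntegral.integral_const_mul,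
      betaReal hlam]
    ring
  rw [h1, h2, h3]
  -- final constant computation
  have hGl : 0 < Real.Gamma lam := Real.Gamma_pos_of_pos hlam
  have hΓ2 : 0 < Real.Gamma (2 * lam) := Real.Gamma_pos_of_pos (by linarith)
  have hπ : 0 < Real.sqrt Real.pi := Real.sqrt_pos.mpr Real.pi_pos
  have hdup := Real.Gamma_mul_Gamma_add_half lam
  have h4 : (4:ℝ) ^ (lam - 1) = (2:ℝ) ^ (2 * lam - 2) := by
    rw [Real.rpow_def_of_pos (by norm_num : (0:ℝ) < 4),
      Real.rpow_def_of_pos (by norm_num : (0:ℝ) < 2),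
      show Real.log 4 = 2 * Real.log 2 from by
        rw [show (4:ℝ) = 2 ^ 2 by norm_num, Real.log_pow]; push_cast; ring]
    ring_nf
  have hpow : (2:ℝ) ^ (2 * lam - 2) * (2:ℝ) ^ (1 - 2 * lam) = 2⁻¹ := by
    rw [← Real.rpow_add (by norm_num : (0:ℝ) < 2)]
    norm_num
  simp only [cLam]
  rw [h4]
  set Gh := Real.Gamma (lam + 1 / 2) with hGh
  set G1 := Real.Gamma lam with hG1
  set G2 := Real.Gamma (2 * lam) with hG2
  set sp := Real.sqrt Real.pi with hsp
  set A := (2:ℝ) ^ (2 * lam - 2) with hA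
  set B := (2:ℝ) ^ (1 - 2 * lam) with hB
  field_simp
  linear_combination (2 * A) * hdup + (2 * G2 * sp) * hpow
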